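/- Let X₁, …, Xₙ be independent mean-zero random variables taking values in a real Hilbert space H. Then for every λ ≥ 0, E[cosh(λ·‖X₁ + ⋯ + Xₙ‖)] ≤ ∏_{j=1}^{n} E[exp(λ·‖X_j‖) − λ·‖X_j‖]. -/

import Mathlib

open MeasureTheory ProbabilityTheory

section PinelisAux

open Real Set

lemma pinelis_convexOn_sinh : ConvexOn ℝ (Set.Ici (0:ℝ)) Real.sinh := by
  refine MonotoneOn.convexOn_of_deriv (convex_Ici 0) Real.continuous_sinh.continuousOn
    (Real.differentiable_sinh.differentiableOn) ?_
  rw [Real.deriv_sinh, interior_Ici]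
  intro a ha b hb hab
  rw [Real.cosh_le_cosh, abs_of_pos ha, abs_of_pos hb]
  exact hab

lemma pinelis_sinh_div_mono {a b : ℝ} (ha : 0 < a) (hab : a ≤ b) :
    Real.sinh a / a ≤ Real.sinh b / b := by
  have h := pinelis_convexOn_sinh.secant_mono (a := 0) (x := a) (y := b)
    (Set.self_mem_Ici) (le_of_lt ha) (le_of_lt (lt_of_lt_of_le ha hab))
    ha.ne' (lt_of_lt_of_le ha hab).ne' hab
  simpa [Real.sinh_zero] using h

lemma pinelis_convexOn_cosh_sqrt {l : ℝ} (hl : 0 ≤ l) :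
    ConvexOn ℝ (Set.Ici (0:ℝ)) (fun t => Real.cosh (l * Real.sqrt t)) := by
  rcases eq_or_lt_of_le hl with h0 | hl
  · simp only [← h0, zero_mul, Real.cosh_zero]
    exact convexOn_const 1 (convex_Ici 0)
  have hderiv : ∀ t ∈ Set.Ioi (0:ℝ), HasDerivAt (fun t => Real.cosh (l * Real.sqrt t))
      (Real.sinh (l * Real.sqrt t) * (l * (1 / (2 * Real.sqrt t)))) t := by
    intro t ht
    have h1 : HasDerivAt Real.sqrt (1 / (2 * Real.sqrt t)) t := Real.hasDerivAt_sqrt (ne_of_gt ht)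
    have h2 : HasDerivAt (fun t => l * Real.sqrt t) (l * (1 / (2 * Real.sqrt t))) t :=
      h1.const_mul l
    exact (Real.hasDerivAt_cosh _).comp t h2
  refine MonotoneOn.convexOn_of_deriv (convex_Ici 0)
    (Real.continuous_cosh.comp (continuous_const.mul Real.continuous_sqrt)).continuousOn ?_ ?_
  · rw [interior_Ici]
    intro t ht
    exact ((hderiv t ht).differentiableAt).differentiableWithinAt
  · rw [interior_Ici]
    intro t₁ ht₁ t₂ ht₂ ht
    rw [(hderiv t₁ ht₁).deriv, (hderiv t₂ ht₂).deriv]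
    have hs₁ : 0 < Real.sqrt t₁ := Real.sqrt_pos.2 ht₁
    have hs₂ : 0 < Real.sqrt t₂ := Real.sqrt_pos.2 ht₂
    have hss : Real.sqrt t₁ ≤ Real.sqrt t₂ := Real.sqrt_le_sqrt ht
    have key := pinelis_sinh_div_mono (a := l * Real.sqrt t₁) (b := l * Real.sqrt t₂)
      (by positivity) (by nlinarith)
    have e1 : Real.sinh (l * Real.sqrt t₁) * (l * (1 / (2 * Real.sqrt t₁)))
        = (Real.sinh (l * Real.sqrt t₁) / (l * Real.sqrt t₁)) * (l^2/2) := by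
      field_simp
    have e2 : Real.sinh (l * Real.sqrt t₂) * (l * (1 / (2 * Real.sqrt t₂)))
        = (Real.sinh (l * Real.sqrt t₂) / (l * Real.sqrt t₂)) * (l^2/2) := by
      field_simp
    rw [e1, e2]
    exact mul_le_mul_of_nonneg_right key (by positivity)

lemma pinelis_cosh_le_exp_sub {t : ℝ} (ht : 0 ≤ t) : Real.cosh t ≤ Real.exp t - t := by
  have h1 : Real.exp t = Real.cosh t + Real.sinh t := (Real.cosh_add_sinh t).symm
  have h2 : t ≤ Real.sinh t := Real.self_le_sinh_iff.2 ht
  linarith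

lemma pinelis_cosh_le_exp {t : ℝ} (ht : 0 ≤ t) : Real.cosh t ≤ Real.exp t := by
  have h1 : Real.exp t = Real.cosh t + Real.sinh t := (Real.cosh_add_sinh t).symm
  have h2 : 0 ≤ Real.sinh t := Real.sinh_nonneg_iff.2 ht
  linarith

lemma pinelis_pointwise {H : Type*} [NormedAddCommGroup H] [InnerProductSpace ℝ H]
    {l : ℝ} (hl : 0 ≤ l) (y z : H) :
    Real.cosh (l * ‖y + z‖) ≤ Real.cosh (l * ‖y‖) * (Real.exp (l * ‖z‖) - l * ‖z‖)
      + (l * Real.sinh (l * ‖y‖) / ‖y‖) * (inner ℝ y z : ℝ) := by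
  rcases eq_or_ne y 0 with rfl | hy
  · simp only [norm_zero, mul_zero, Real.cosh_zero, inner_zero_left, zero_add, one_mul,
      Real.sinh_zero, zero_div, zero_mul, add_zero]
    exact pinelis_cosh_le_exp_sub (mul_nonneg hl (norm_nonneg _))
  rcases eq_or_ne z 0 with rfl | hz
  · simp
  have hu0 : 0 < ‖y‖ := norm_pos_iff.2 hy
  have hv0 : 0 < ‖z‖ := norm_pos_iff.2 hz
  set u := ‖y‖ with hu
  set v := ‖z‖ with hv
  set s : ℝ := inner ℝ y z with hs
  have hsle : |s| ≤ u * v := abs_real_inner_le_norm y z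
  have hsle' : s ≤ u * v := (abs_le.1 hsle).2
  have hnorm : ‖y + z‖^2 = u^2 + 2*s + v^2 := by rw [norm_add_sq_real]
  set θ : ℝ := s / (u * v) with hθ
  have hθ1 : |θ| ≤ 1 := by
    rw [hθ, abs_div, abs_of_pos (by positivity : (0:ℝ) < u*v), div_le_one (by positivity)]
    exact hsle
  obtain ⟨hθa, hθb⟩ := abs_le.1 hθ1
  set α : ℝ := (1 + θ)/2 with hα
  have hα0 : 0 ≤ α := by rw [hα]; linarith
  have hcomb : α * (u+v)^2 + (1-α) * (u-v)^2 = ‖y + z‖^2 := by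
    rw [hnorm, hα, hθ]; field_simp; ring
  have hconv := (pinelis_convexOn_cosh_sqrt hl).2 (Set.mem_Ici.2 (sq_nonneg (u+v)))
    (Set.mem_Ici.2 (sq_nonneg (u-v))) hα0 (by linarith : (0:ℝ) ≤ 1 - α)
    (by ring : α + (1 - α) = 1)
  simp only [smul_eq_mul] at hconv
  rw [hcomb, Real.sqrt_sq (norm_nonneg (y+z)), Real.sqrt_sq (by positivity : (0:ℝ) ≤ u+v),
    Real.sqrt_sq_eq_abs] at hconv
  have e2 : Real.cosh (l * |u - v|) = Real.cosh (l * (u - v)) := by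
    rw [← Real.cosh_abs (l * (u-v)), abs_mul, abs_of_nonneg hl]
  rw [e2] at hconv
  set A := Real.sinh (l*u) with hA
  set B := Real.sinh (l*v) with hB
  set C := Real.cosh (l*u) with hC
  set D := Real.cosh (l*v) with hD
  have stepA : Real.cosh (l * ‖y + z‖) ≤ C * D + A * B * θ := by
    refine hconv.trans (le_of_eq ?_)
    rw [mul_add, mul_sub, Real.cosh_add, Real.cosh_sub, hα, ← hA, ← hB, ← hC, ← hD]
    ring
  have hA0 : 0 ≤ A := Real.sinh_nonneg_iff.2 (mul_nonneg hl hu0.le)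
  have hAC : A ≤ C := by
    nlinarith [Real.cosh_sub_sinh (l*u), Real.exp_pos (-(l*u))]
  have hBlv : l * v ≤ B := Real.self_le_sinh_iff.2 (mul_nonneg hl hv0.le)
  have hexp : Real.exp (l*v) = D + B := (Real.cosh_add_sinh _).symm
  have h1 : A * s ≤ C * (u * v) :=
    le_trans (mul_le_mul_of_nonneg_left hsle' hA0)
      (mul_le_mul_of_nonneg_right hAC (by positivity))
  have hdiv : A * B * θ - (l * A / u) * s = (A * s * (B - l*v))/(u*v) := by
    rw [hθ]; field_simp
  have h2 : (A * s * (B - l*v))/(u*v) ≤ C * (B - l*v) := by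
    rw [div_le_iff₀ (by positivity : (0:ℝ) < u*v)]
    calc A * s * (B - l*v) ≤ C * (u*v) * (B - l*v) :=
          mul_le_mul_of_nonneg_right h1 (by linarith)
      _ = C * (B - l*v) * (u*v) := by ring
  have h3 : A * B * θ - (l * A / u) * s ≤ C * (B - l*v) := by rw [hdiv]; exact h2
  have h4 : C * (Real.exp (l*v) - l*v) = C * D + C * (B - l*v) := by rw [hexp]; ring
  calc Real.cosh (l * ‖y + z‖) ≤ C * D + A * B * θ := stepA
    _ ≤ C * (Real.exp (l*v) - l*v) + (l * A / u) * s := by linarith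

variable {H : Type*} [NormedAddCommGroup H] [InnerProductSpace ℝ H] [CompleteSpace H]
    [MeasurableSpace H] [BorelSpace H] [SecondCountableTopology H]

omit [SecondCountableTopology H] in
lemma pinelis_inner_step {ν : Measure H} [IsProbabilityMeasure ν]
    {l : ℝ} (hl : 0 ≤ l)
    (hid : Integrable (fun z => z) ν) (hmean : ∫ z, z ∂ν = 0)
    (hexp : Integrable (fun z => Real.exp (l * ‖z‖)) ν) (y : H) :
    Integrable (fun z => Real.cosh (l * ‖y + z‖)) ν ∧
    ∫ z, Real.cosh (l * ‖y + z‖) ∂ν ≤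
      Real.cosh (l * ‖y‖) * ∫ z, (Real.exp (l * ‖z‖) - l * ‖z‖) ∂ν := by
  set c : ℝ := l * Real.sinh (l * ‖y‖) / ‖y‖ with hc
  have hnormint : Integrable (fun z : H => ‖z‖) ν := hid.norm
  have hsub : Integrable (fun z : H => Real.exp (l * ‖z‖) - l * ‖z‖) ν :=
    hexp.sub (hnormint.const_mul l)
  have hinner : Integrable (fun z : H => (inner ℝ ((c : ℝ) • y) z : ℝ)) ν := by
    have := (innerSL ℝ ((c : ℝ) • y)).integrable_comp hid
    simpa [real_inner_smul_left] using this
  have hRHS : Integrable (fun z : H => Real.cosh (l * ‖y‖) * (Real.exp (l * ‖z‖) - l * ‖z‖)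
      + (inner ℝ ((c:ℝ) • y) z : ℝ)) ν := (hsub.const_mul _).add hinner
  have hptwise : ∀ z : H, Real.cosh (l * ‖y + z‖) ≤
      Real.cosh (l * ‖y‖) * (Real.exp (l * ‖z‖) - l * ‖z‖) + (inner ℝ ((c:ℝ) • y) z : ℝ) := by
    intro z
    have := pinelis_pointwise hl y z
    rw [real_inner_smul_left]; rwa [← hc] at this
  have hmeasL : AEStronglyMeasurable (fun z : H => Real.cosh (l * ‖y + z‖)) ν := by
    exact (Real.continuous_cosh.comp (continuous_const.mul
      ((continuous_const.add continuous_id).norm))).aestronglyMeasurable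
  have hLHS : Integrable (fun z : H => Real.cosh (l * ‖y + z‖)) ν := by
    refine hRHS.mono' hmeasL (ae_of_all _ fun z => ?_)
    rw [Real.norm_eq_abs, abs_of_pos (Real.cosh_pos _)]
    exact hptwise z
  refine ⟨hLHS, ?_⟩
  calc ∫ z, Real.cosh (l * ‖y + z‖) ∂ν
      ≤ ∫ z, (Real.cosh (l * ‖y‖) * (Real.exp (l * ‖z‖) - l * ‖z‖)
          + (inner ℝ ((c:ℝ) • y) z : ℝ)) ∂ν := integral_mono hLHS hRHS hptwise
    _ = Real.cosh (l * ‖y‖) * ∫ z, (Real.exp (l * ‖z‖) - l * ‖z‖) ∂ν := by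
        rw [integral_add (hsub.const_mul _) hinner, integral_inner hid, hmean,
          inner_zero_right, add_zero, integral_const_mul]

variable {Ω : Type*} [MeasurableSpace Ω] {μ : Measure Ω} [IsProbabilityMeasure μ]

lemma pinelis_step {S Z : Ω → H} (hS : Measurable S) (hZ : Measurable Z)
    (hSZ : IndepFun S Z μ) (hintZ : Integrable Z μ) (hmeanZ : ∫ ω, Z ω ∂μ = 0)
    {l : ℝ} (hl : 0 ≤ l)
    (hexpZ : Integrable (fun ω => Real.exp (l * ‖Z ω‖)) μ)
    (hcoshS : Integrable (fun ω => Real.cosh (l * ‖S ω‖)) μ)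
    (hcoshSZ : Integrable (fun ω => Real.cosh (l * ‖S ω + Z ω‖)) μ) :
    ∫ ω, Real.cosh (l * ‖S ω + Z ω‖) ∂μ ≤
      (∫ ω, Real.cosh (l * ‖S ω‖) ∂μ) * ∫ ω, (Real.exp (l * ‖Z ω‖) - l * ‖Z ω‖) ∂μ := by
  set νS := μ.map S with hνS
  set νZ := μ.map Z with hνZ
  haveI : IsProbabilityMeasure νS := Measure.isProbabilityMeasure_map hS.aemeasurable
  haveI : IsProbabilityMeasure νZ := Measure.isProbabilityMeasure_map hZ.aemeasurable
  have hprod : μ.map (fun ω => (S ω, Z ω)) = νS.prod νZ :=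
    (indepFun_iff_map_prod_eq_prod_map_map hS.aemeasurable hZ.aemeasurable).1 hSZ
  have hpair : AEMeasurable (fun ω => (S ω, Z ω)) μ := (hS.prodMk hZ).aemeasurable
  have hfcont : Continuous (fun p : H × H => Real.cosh (l * ‖p.1 + p.2‖)) := by
    exact Real.continuous_cosh.comp (continuous_const.mul
      ((continuous_fst.add continuous_snd).norm))
  have hmapint : ∫ ω, Real.cosh (l * ‖S ω + Z ω‖) ∂μ
      = ∫ p : H × H, Real.cosh (l * ‖p.1 + p.2‖) ∂(νS.prod νZ) := by
    rw [← hprod, integral_map hpair hfcont.aestronglyMeasurable]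
  have hfint : Integrable (fun p : H × H => Real.cosh (l * ‖p.1 + p.2‖)) (νS.prod νZ) := by
    rw [← hprod]
    rw [integrable_map_measure hfcont.aestronglyMeasurable hpair]
    exact hcoshSZ
  have ce : Continuous (fun z : H => Real.exp (l * ‖z‖)) := by fun_prop
  have cc : Continuous (fun z : H => Real.cosh (l * ‖z‖)) := by fun_prop
  have cs : Continuous (fun z : H => Real.exp (l * ‖z‖) - l * ‖z‖) := by fun_prop
  have hidZ : Integrable (fun z : H => z) νZ :=
    (integrable_map_measure aestronglyMeasurable_id hZ.aemeasurable).2 hintZ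
  have hmeanνZ : ∫ z, z ∂νZ = 0 :=
    (integral_map hZ.aemeasurable aestronglyMeasurable_id).trans hmeanZ
  have hexpνZ : Integrable (fun z : H => Real.exp (l * ‖z‖)) νZ :=
    (integrable_map_measure ce.aestronglyMeasurable hZ.aemeasurable).2 hexpZ
  set CZ := ∫ z, (Real.exp (l * ‖z‖) - l * ‖z‖) ∂νZ with hCZ
  have hCZ' : CZ = ∫ ω, (Real.exp (l * ‖Z ω‖) - l * ‖Z ω‖) ∂μ :=
    integral_map hZ.aemeasurable cs.aestronglyMeasurable
  have hcoshνS : Integrable (fun y : H => Real.cosh (l * ‖y‖)) νS :=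
    (integrable_map_measure cc.aestronglyMeasurable hS.aemeasurable).2 hcoshS
  have hcoshνS' : ∫ y, Real.cosh (l * ‖y‖) ∂νS = ∫ ω, Real.cosh (l * ‖S ω‖) ∂μ :=
    integral_map hS.aemeasurable cc.aestronglyMeasurable
  rw [hmapint, ← hcoshνS', ← hCZ']
  have hfub : ∫ p : H × H, Real.cosh (l * ‖p.1 + p.2‖) ∂(νS.prod νZ)
      = ∫ y, ∫ z, Real.cosh (l * ‖y + z‖) ∂νZ ∂νS :=
    (integral_integral (f := fun y z => Real.cosh (l * ‖y + z‖)) hfint).symm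
  rw [hfub]
  have hmarg : Integrable (fun y => ∫ z, Real.cosh (l * ‖y + z‖) ∂νZ) νS :=
    (hfint : Integrable (Function.uncurry fun y z => Real.cosh (l * ‖y + z‖))
      (νS.prod νZ)).integral_prod_left
  calc ∫ y, ∫ z, Real.cosh (l * ‖y + z‖) ∂νZ ∂νS
      ≤ ∫ y, Real.cosh (l * ‖y‖) * CZ ∂νS := by
        refine integral_mono hmarg (hcoshνS.mul_const CZ) (fun y => ?_)
        exact (pinelis_inner_step hl hidZ hmeanνZ hexpνZ y).2
    _ = (∫ y, Real.cosh (l * ‖y‖) ∂νS) * CZ := by rw [integral_mul_const]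

variable {n : ℕ} {X : Fin n → Ω → H}

omit [InnerProductSpace ℝ H] [CompleteSpace H] in
lemma pinelis_int_cosh (hmeas : ∀ j, Measurable (X j))
    (hindep : iIndepFun X μ)
    {l : ℝ} (hl : 0 ≤ l)
    (hexp : ∀ j, Integrable (fun ω => Real.exp (l * ‖X j ω‖)) μ) (s : Finset (Fin n)) :
    Integrable (fun ω => Real.cosh (l * ‖∑ j ∈ s, X j ω‖)) μ := by
  have hN : iIndepFun (fun j ω => ‖X j ω‖) μ :=
    hindep.comp (fun j (x : H) => ‖x‖) (fun j => measurable_norm)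
  have hNe : Integrable (fun ω => Real.exp (l * (∑ j ∈ s, fun ω => ‖X j ω‖) ω)) μ :=
    iIndepFun.integrable_exp_mul_sum hN (fun j => (hmeas j).norm) (fun j _ => hexp j)
  have hsummeas : Measurable (fun ω => ∑ j ∈ s, X j ω) := by
    exact Finset.measurable_sum s (fun j _ => hmeas j)
  refine hNe.mono' ?_ (ae_of_all _ fun ω => ?_)
  · exact ((Real.continuous_cosh.comp (continuous_const.mul continuous_norm)).measurable.comp
      hsummeas).aestronglyMeasurable
  · rw [Real.norm_eq_abs, abs_of_pos (Real.cosh_pos _)]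
    have h1 : Real.cosh (l * ‖∑ j ∈ s, X j ω‖) ≤ Real.exp (l * ‖∑ j ∈ s, X j ω‖) :=
      pinelis_cosh_le_exp (by positivity)
    refine h1.trans (Real.exp_le_exp.2 (mul_le_mul_of_nonneg_left ?_ hl))
    simpa using norm_sum_le s (fun j => X j ω)

lemma pinelis_key (hmeas : ∀ j, Measurable (X j))
    (hindep : iIndepFun X μ)
    (hint : ∀ j, Integrable (X j) μ)
    (hmean : ∀ j, ∫ ω, X j ω ∂μ = 0)
    {l : ℝ} (hl : 0 ≤ l)
    (hexp : ∀ j, Integrable (fun ω => Real.exp (l * ‖X j ω‖)) μ) (s : Finset (Fin n)) :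
    ∫ ω, Real.cosh (l * ‖∑ j ∈ s, X j ω‖) ∂μ ≤
      ∏ j ∈ s, ∫ ω, (Real.exp (l * ‖X j ω‖) - l * ‖X j ω‖) ∂μ := by
  classical
  induction s using Finset.induction_on with
  | empty => simp
  | insert i s hi ih =>
    have hC : ∀ j, (1:ℝ) ≤ ∫ ω, (Real.exp (l * ‖X j ω‖) - l * ‖X j ω‖) ∂μ := by
      intro j
      have : ∫ ω, (1:ℝ) ∂μ ≤ ∫ ω, (Real.exp (l * ‖X j ω‖) - l * ‖X j ω‖) ∂μ := by
        refine integral_mono (integrable_const 1) ((hexp j).sub ((hint j).norm.const_mul l))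
          (fun ω => ?_)
        have := Real.add_one_le_exp (l * ‖X j ω‖)
        simpa using by linarith
      simpa using this
    have hSmeas : Measurable (fun ω => ∑ j ∈ s, X j ω) :=
      Finset.measurable_sum s (fun j _ => hmeas j)
    have hSZ : IndepFun (fun ω => ∑ j ∈ s, X j ω) (X i) μ := by
      have h := hindep.indepFun_finsetSum_of_notMem hmeas hi
      have e : (∑ j ∈ s, X j) = fun ω => ∑ j ∈ s, X j ω := by
        funext ω; simp [Finset.sum_apply]
      rwa [e] at h
    have hcoshS := pinelis_int_cosh hmeas hindep hl hexp s
    have hcoshSZ := pinelis_int_cosh hmeas hindep hl hexp (insert i s)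
    have hcomm : ∀ ω, X i ω + ∑ j ∈ s, X j ω = (∑ j ∈ s, X j ω) + X i ω :=
      fun ω => add_comm _ _
    rw [Finset.prod_insert hi]
    simp only [Finset.sum_insert hi, hcomm]
    simp only [Finset.sum_insert hi, hcomm] at hcoshSZ
    calc ∫ ω, Real.cosh (l * ‖(∑ j ∈ s, X j ω) + X i ω‖) ∂μ
        ≤ (∫ ω, Real.cosh (l * ‖∑ j ∈ s, X j ω‖) ∂μ) *
            ∫ ω, (Real.exp (l * ‖X i ω‖) - l * ‖X i ω‖) ∂μ :=
          pinelis_step hSmeas (hmeas i) hSZ (hint i) (hmean i) hl (hexp i) hcoshS hcoshSZ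
      _ ≤ (∏ j ∈ s, ∫ ω, (Real.exp (l * ‖X j ω‖) - l * ‖X j ω‖) ∂μ) *
            ∫ ω, (Real.exp (l * ‖X i ω‖) - l * ‖X i ω‖) ∂μ :=
          mul_le_mul_of_nonneg_right ih (le_trans zero_le_one (hC i))
      _ = _ := mul_comm _ _

end PinelisAux

lemma pinelis_iIndepFun_congr_ae {ι Ω β : Type*} [Countable ι] [MeasurableSpace Ω]
    {μ : MeasureTheory.Measure Ω}
    {m : MeasurableSpace β} {f g : ι → Ω → β}
    (h : iIndepFun f μ) (hfg : ∀ i, f i =ᵐ[μ] g i) :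
    iIndepFun g μ := by
  rw [iIndepFun_iff_measure_inter_preimage_eq_mul] at h ⊢
  intro S sets hsets
  have hae : ∀ᵐ ω ∂μ, ∀ i, f i ω = g i ω := (MeasureTheory.ae_all_iff).2 hfg
  have h1 : (⋂ i ∈ S, g i ⁻¹' sets i) =ᵐ[μ] (⋂ i ∈ S, f i ⁻¹' sets i) := by
    filter_upwards [hae] with ω hω
    change (ω ∈ ⋂ i ∈ S, g i ⁻¹' sets i) = (ω ∈ ⋂ i ∈ S, f i ⁻¹' sets i)
    simp only [eq_iff_iff, Set.mem_iInter, Set.mem_preimage]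
    constructor <;> intro hmem i hi
    · rw [hω i]; exact hmem i hi
    · rw [← hω i]; exact hmem i hi
  have h2 : ∀ i, (f i ⁻¹' sets i : Set Ω) =ᵐ[μ] (g i ⁻¹' sets i) := by
    intro i
    filter_upwards [hfg i] with ω hω
    change (ω ∈ f i ⁻¹' sets i) = (ω ∈ g i ⁻¹' sets i)
    simp only [Set.mem_preimage, hω]
  rw [measure_congr h1, h S hsets]
  exact Finset.prod_congr rfl (fun i _ => measure_congr (h2 i))

theorem stmt_2 {Ω : Type*} [MeasurableSpace Ω] {μ : Measure Ω} [IsProbabilityMeasure μ]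
    {H : Type*} [NormedAddCommGroup H] [InnerProductSpace ℝ H] [CompleteSpace H]
    [MeasurableSpace H] [BorelSpace H]
    (n : ℕ) (X : Fin n → Ω → H)
    (hmeas : ∀ j, Measurable (X j))
    (hindep : iIndepFun X μ)
    (hint : ∀ j, Integrable (X j) μ)
    (hmean : ∀ j, ∫ ω, X j ω ∂μ = 0)
    (l : ℝ) (hl : 0 ≤ l)
    (hcosh : Integrable (fun ω => Real.cosh (l * ‖∑ j, X j ω‖)) μ)
    (hexp : ∀ j, Integrable (fun ω => Real.exp (l * ‖X j ω‖)) μ) :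
    ∫ ω, Real.cosh (l * ‖∑ j, X j ω‖) ∂μ ≤
      ∏ j, ∫ ω, (Real.exp (l * ‖X j ω‖) - l * ‖X j ω‖) ∂μ := by
  classical
  set Y : Fin n → Ω → H := fun j => ((hint j).1.mk (X j)) with hYdef
  have hYsm : ∀ j, MeasureTheory.StronglyMeasurable (Y j) :=
    fun j => (hint j).1.stronglyMeasurable_mk
  have hYae : ∀ j, X j =ᵐ[μ] Y j := fun j => (hint j).1.ae_eq_mk
  have hYmeas : ∀ j, Measurable (Y j) := fun j => (hYsm j).measurable
  have hYindep : iIndepFun Y μ :=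
    pinelis_iIndepFun_congr_ae hindep hYae
  have hYint : ∀ j, Integrable (Y j) μ := fun j => (hint j).congr (hYae j)
  have hYmean : ∀ j, ∫ ω, Y j ω ∂μ = 0 := fun j => by
    rw [← integral_congr_ae (hYae j)]; exact hmean j
  -- separable closed subspace containing all the (modified) variables
  set T : Set H := ⋃ j, Set.range (Y j) with hTdef
  have hT : TopologicalSpace.IsSeparable T :=
    TopologicalSpace.IsSeparable.iUnion (fun j => (hYsm j).isSeparable_range)
  set K : Submodule ℝ H := (Submodule.span ℝ T).topologicalClosure with hKdef
  have hKc : IsClosed (K : Set H) := (Submodule.span ℝ T).isClosed_topologicalClosure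
  have hKsep : TopologicalSpace.IsSeparable (K : Set H) := hT.span.closure
  haveI : TopologicalSpace.SeparableSpace K := hKsep.separableSpace
  haveI : SecondCountableTopology K := UniformSpace.secondCountable_of_separable K
  haveI : CompleteSpace K := hKc.completeSpace_coe
  haveI : BorelSpace K := Subtype.borelSpace _
  have hmemK : ∀ j ω, Y j ω ∈ K := fun j ω =>
    Submodule.le_topologicalClosure _
      (Submodule.subset_span (Set.mem_iUnion.2 ⟨j, Set.mem_range_self ω⟩))
  -- measurable retraction onto K
  set gH : H → H := (K : Set H).piecewise id 0 with hgHdef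
  have hgHmeas : Measurable gH :=
    Measurable.piecewise hKc.measurableSet measurable_id measurable_const
  have hgmem : ∀ x, gH x ∈ K := fun x => by
    by_cases h : x ∈ (K : Set H)
    · rw [hgHdef, Set.piecewise_eq_of_mem _ _ _ h]; exact h
    · rw [hgHdef, Set.piecewise_eq_of_notMem _ _ _ h]; exact K.zero_mem
  set r : H → K := fun x => ⟨gH x, hgmem x⟩ with hrdef
  have hr : Measurable r := hgHmeas.subtype_mk
  set Z : Fin n → Ω → K := fun j ω => r (Y j ω) with hZdef
  have hZcoe : ∀ j ω, ((Z j ω : K) : H) = Y j ω := fun j ω => by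
    simp only [hZdef, hrdef, hgHdef]
    exact Set.piecewise_eq_of_mem _ _ _ (hmemK j ω)
  have hZmeas : ∀ j, Measurable (Z j) := fun j => hr.comp (hYmeas j)
  have hZindep : iIndepFun Z μ :=
    hYindep.comp (fun _ => r) (fun _ => hr)
  have hZnorm : ∀ j ω, ‖Z j ω‖ = ‖Y j ω‖ := fun j ω => by
    rw [← hZcoe j ω]; rfl
  have hZint : ∀ j, Integrable (Z j) μ := fun j =>
    Integrable.mono' (hYint j).norm ((hZmeas j).aestronglyMeasurable)
      (ae_of_all _ fun ω => le_of_eq (hZnorm j ω))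
  have hZmean : ∀ j, ∫ ω, Z j ω ∂μ = 0 := fun j => by
    have h1 : (K.subtypeL) (∫ ω, Z j ω ∂μ) = ∫ ω, K.subtypeL (Z j ω) ∂μ :=
      (ContinuousLinearMap.integral_comp_comm _ (hZint j)).symm
    have h2 : ∫ ω, K.subtypeL (Z j ω) ∂μ = ∫ ω, Y j ω ∂μ :=
      integral_congr_ae (ae_of_all _ fun ω => by
        show K.subtypeL (Z j ω) = Y j ω
        rw [Submodule.subtypeL_apply]; exact hZcoe j ω)
    have h3 : ((∫ ω, Z j ω ∂μ : K) : H) = 0 := by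
      rw [← Submodule.subtypeL_apply, h1, h2, hYmean j]
    exact Subtype.coe_injective h3
  have hZexp : ∀ j, Integrable (fun ω => Real.exp (l * ‖Z j ω‖)) μ := fun j => by
    have he : (fun ω => Real.exp (l * ‖Z j ω‖)) = fun ω => Real.exp (l * ‖Y j ω‖) :=
      funext fun ω => by rw [hZnorm j ω]
    rw [he]
    exact (hexp j).congr (by filter_upwards [hYae j] with ω h; rw [h])
  have key := pinelis_key hZmeas hZindep hZint hZmean hl hZexp Finset.univ
  have hsum : ∀ ω, ‖∑ j, Z j ω‖ = ‖∑ j, Y j ω‖ := fun ω => by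
    have : ((∑ j, Z j ω : K) : H) = ∑ j, ((Z j ω : K) : H) := by
      exact_mod_cast Submodule.coe_sum K (fun j => Z j ω) Finset.univ
    calc ‖∑ j, Z j ω‖ = ‖((∑ j, Z j ω : K) : H)‖ := rfl
      _ = ‖∑ j, ((Z j ω : K) : H)‖ := by rw [this]
      _ = ‖∑ j, Y j ω‖ := by
          congr 1; exact Finset.sum_congr rfl (fun j _ => hZcoe j ω)
  have hae_sum : (fun ω => Real.cosh (l * ‖∑ j, X j ω‖))
      =ᵐ[μ] (fun ω => Real.cosh (l * ‖∑ j, Z j ω‖)) := by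
    filter_upwards [(MeasureTheory.ae_all_iff).2 hYae] with ω hω
    rw [show (∑ j, X j ω) = ∑ j, Y j ω from Finset.sum_congr rfl (fun j _ => hω j), hsum ω]
  rw [integral_congr_ae hae_sum]
  refine key.trans (le_of_eq ?_)
  refine Finset.prod_congr rfl (fun j _ => ?_)
  refine integral_congr_ae ?_
  filter_upwards [hYae j] with ω h
  rw [hZnorm j ω, h]
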